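/- Let m ≥ 2, n ≥ 2 be integers. Define, for 0 ≤ i ≤ n, A_i = i(n−i) + (C(m+n−2, m−1) + C(m+n−1, m))·((m−1)n + i) + ∑_{j=1}^{i} (1 + (m−1)(i−j+1)/(n−j+1))·C(m+j−2, m−1)·C(m+n−j−1, m−1) and B_i = −m(m−1)·C(m+n−2, m) + (1 + C(m+n−2, m−1))·((m−1)n + i). Then the sequence ((A_i + 1)/B_i)_{0 ≤ i ≤ n} attains its maximum at i = 0 or at i = n; in particular max{(A_i+1)/B_i : 1 ≤ i ≤ n−1} ≤ max{(A_0+1)/B_0, (A_n+1)/B_n}. -/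

import Mathlib

/-- The quantity `A_i` of Theorem 1.4 (for the groups `Δ_{m,n}`), as a rational number. -/
def A4 (m n i : ℕ) : ℚ :=
  (i : ℚ) * ((n : ℚ) - i)
    + ((Nat.choose (m + n - 2) (m - 1) : ℚ) + (Nat.choose (m + n - 1) m : ℚ))
        * (((m : ℚ) - 1) * n + i)
    + ∑ j ∈ Finset.Icc 1 i,
        (1 + ((m : ℚ) - 1) * ((i : ℚ) - j + 1) / ((n : ℚ) - j + 1))
          * (Nat.choose (m + j - 2) (m - 1) : ℚ) * (Nat.choose (m + n - j - 1) (m - 1) : ℚ)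

/-- The quantity `B_i` of Theorem 1.4, as a rational number. -/
def B4 (m n i : ℕ) : ℚ :=
  -(m : ℚ) * ((m : ℚ) - 1) * (Nat.choose (m + n - 2) m : ℚ)
    + (1 + (Nat.choose (m + n - 2) (m - 1) : ℚ)) * (((m : ℚ) - 1) * n + i)

/-- For `m, n ≥ 2`, the sequence `((A_i+1)/B_i)_{0 ≤ i ≤ n}` attains its maximum at
`i = 0` or `i = n`; in particular every term with `1 ≤ i ≤ n−1` is bounded by
`max{(A_0+1)/B_0, (A_n+1)/B_n}`. -/
lemma B4_pos (m n : ℕ) (hm : 2 ≤ m) (hn : 2 ≤ n) (i : ℕ) : 0 < B4 m n i := by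
  obtain ⟨v, rfl⟩ : ∃ v, m = v + 2 := ⟨m - 2, by omega⟩
  obtain ⟨w, rfl⟩ : ∃ w, n = w + 2 := ⟨n - 2, by omega⟩
  have e1 : v + 2 + (w + 2) - 2 = v + w + 2 := by omega
  have e2 : v + 2 - 1 = v + 1 := by omega
  -- identity: choose (v+w+2) (v+2) * (v+2) = choose (v+w+2) (v+1) * (w+1)
  have hid : (v + w + 2).choose (v + 2) * (v + 2) = (v + w + 2).choose (v + 1) * (w + 1) := by
    have := Nat.choose_succ_right_eq (v + w + 2) (v + 1)
    have e : v + w + 2 - (v + 1) = w + 1 := by omega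
    rwa [e] at this
  have hidq : ((v + w + 2).choose (v + 2) : ℚ) * (v + 2) =
      ((v + w + 2).choose (v + 1) : ℚ) * (w + 1) := by exact_mod_cast hid
  have hform : B4 (v + 2) (w + 2) i =
      ((v : ℚ) + 1) * ((w : ℚ) + 2) + (i : ℚ)
        + ((v + w + 2).choose (v + 1) : ℚ) * ((v : ℚ) + 1 + (i : ℚ)) := by
    unfold B4
    rw [e1, e2]
    push_cast
    linear_combination (-(v : ℚ) - 1) * hidq
  rw [hform]
  have h1 : (0:ℚ) ≤ ((v + w + 2).choose (v + 1) : ℚ) := by positivity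
  have h2 : (0:ℚ) ≤ (i : ℚ) := by positivity
  nlinarith [h1, h2]

lemma le_choose' (N k : ℕ) (h1 : 1 ≤ k) (h2 : k < N) : N ≤ N.choose k := by
  induction N with
  | zero => omega
  | succ N ih =>
    rcases Nat.lt_or_ge k N with h | h
    · obtain ⟨k', rfl⟩ : ∃ k', k = k' + 1 := ⟨k - 1, by omega⟩
      rw [Nat.choose_succ_succ]
      have := ih (by omega)
      have hpos : 0 < N.choose k' := Nat.choose_pos (by omega)
      simp only [Nat.succ_eq_add_one] at *
      omega
    · have : k = N := by omega
      subst this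
      rw [Nat.choose_succ_self_right]

lemma key_nat (v u i : ℕ) :
    2 * (i + 1) ≤ (v + 1) * ((v + i + 1).choose (v + 1) * (v + u + 2).choose (v + 1)) := by
  have hc : i + 1 ≤ (v + i + 1).choose (v + 1) := by
    rcases Nat.eq_zero_or_pos i with rfl | hi
    · simp
    · have := le_choose' (v + i + 1) (v + 1) (by omega) (by omega)
      omega
  have hd : 2 ≤ (v + u + 2).choose (v + 1) := by
    have := le_choose' (v + u + 2) (v + 1) (by omega) (by omega)
    omega
  calc 2 * (i + 1) = 1 * ((i + 1) * 2) := by ring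
    _ ≤ (v + 1) * ((v + i + 1).choose (v + 1) * (v + u + 2).choose (v + 1)) := by
        apply Nat.mul_le_mul (by omega)
        exact Nat.mul_le_mul hc hd

set_option maxHeartbeats 1000000 in
lemma A4_convex (m n : ℕ) (hm : 2 ≤ m) (hn : 2 ≤ n) (i : ℕ) (h : i + 2 ≤ n) :
    2 * A4 m n (i + 1) ≤ A4 m n i + A4 m n (i + 2) := by
  obtain ⟨v, rfl⟩ : ∃ v, m = v + 2 := ⟨m - 2, by omega⟩
  obtain ⟨u, rfl⟩ : ∃ u, n = i + 2 + u := ⟨n - (i + 2), by omega⟩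
  -- abbreviations
  set c : ℕ → ℚ := fun j => (Nat.choose (v + 2 + j - 2) (v + 2 - 1) : ℚ) with hc
  set d : ℕ → ℚ := fun j => (Nat.choose (v + 2 + (i + 2 + u) - j - 1) (v + 2 - 1) : ℚ) with hd
  set w : ℕ → ℕ → ℚ := fun a j =>
    (1 + (((v + 2 : ℕ) : ℚ) - 1) * ((a : ℚ) - j + 1) / (((i + 2 + u : ℕ) : ℚ) - j + 1)) with hw
  have hA : ∀ a : ℕ, A4 (v + 2) (i + 2 + u) a =
      (a : ℚ) * (((i + 2 + u : ℕ) : ℚ) - a)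
        + ((Nat.choose (v + 2 + (i + 2 + u) - 2) (v + 2 - 1) : ℚ)
            + (Nat.choose (v + 2 + (i + 2 + u) - 1) (v + 2) : ℚ))
            * ((((v + 2 : ℕ) : ℚ) - 1) * ((i + 2 + u : ℕ) : ℚ) + a)
        + ∑ j ∈ Finset.Icc 1 a, w a j * c j * d j := by
    intro a; rfl
  -- peel top terms
  have hs2 : ∑ j ∈ Finset.Icc 1 (i + 2), w (i + 2) j * c j * d j =
      (∑ j ∈ Finset.Icc 1 i, w (i + 2) j * c j * d j)
        + w (i + 2) (i + 1) * c (i + 1) * d (i + 1)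
        + w (i + 2) (i + 2) * c (i + 2) * d (i + 2) := by
    rw [Finset.sum_Icc_succ_top (by omega), Finset.sum_Icc_succ_top (by omega)]
  have hs1 : ∑ j ∈ Finset.Icc 1 (i + 1), w (i + 1) j * c j * d j =
      (∑ j ∈ Finset.Icc 1 i, w (i + 1) j * c j * d j)
        + w (i + 1) (i + 1) * c (i + 1) * d (i + 1) := by
    rw [Finset.sum_Icc_succ_top (by omega)]
  -- linearity of weights in the first argument
  have hlin : (∑ j ∈ Finset.Icc 1 i, w i j * c j * d j)
      + (∑ j ∈ Finset.Icc 1 i, w (i + 2) j * c j * d j)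
      = 2 * ∑ j ∈ Finset.Icc 1 i, w (i + 1) j * c j * d j := by
    rw [← Finset.sum_add_distrib, Finset.mul_sum]
    apply Finset.sum_congr rfl
    intro j hj
    simp only [hw]
    push_cast
    ring
  -- the tail inequality
  have htail : 2 * (w (i + 1) (i + 1) * c (i + 1) * d (i + 1)) + 2 ≤
      w (i + 2) (i + 1) * c (i + 1) * d (i + 1)
        + w (i + 2) (i + 2) * c (i + 2) * d (i + 2) := by
    simp only [hw, hc, hd]
    rw [show v + 2 + (i + 1) - 2 = v + i + 1 from by omega,
        show v + 2 + (i + 2) - 2 = v + i + 2 from by omega,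
        show v + 2 + (i + 2 + u) - (i + 1) - 1 = v + u + 2 from by omega,
        show v + 2 + (i + 2 + u) - (i + 2) - 1 = v + u + 1 from by omega]
    set C1 : ℚ := ((v + i + 1).choose (v + 1) : ℚ) with hC1
    set C2 : ℚ := ((v + i + 2).choose (v + 1) : ℚ) with hC2
    set D1 : ℚ := ((v + u + 2).choose (v + 1) : ℚ) with hD1
    set D2 : ℚ := ((v + u + 1).choose (v + 1) : ℚ) with hD2
    rw [show v + 2 - 1 = v + 1 from by omega]
    have hq1 : ((i + 2 + u : ℕ) : ℚ) - ((i + 1 : ℕ) : ℚ) + 1 = (u : ℚ) + 2 := by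
      push_cast; ring
    have hq2 : ((i + 2 + u : ℕ) : ℚ) - ((i + 2 : ℕ) : ℚ) + 1 = (u : ℚ) + 1 := by
      push_cast; ring
    rw [hq1, hq2, ← hC1, ← hC2, ← hD1, ← hD2]
    -- key inequality, cast from ℕ
    have hX : 2 * ((i : ℚ) + 1) ≤ ((v : ℚ) + 1) * (C1 * D1) := by
      rw [hC1, hD1]
      exact_mod_cast key_nat v u i
    -- ratio identity
    have hE1 : C1 * ((v : ℚ) + (i : ℚ) + 2) = C2 * ((i : ℚ) + 1) := by
      have e := Nat.choose_mul_succ_eq (v + i + 1) (v + 1)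
      rw [show v + i + 1 + 1 = v + i + 2 from by omega,
          show v + i + 1 + 1 - (v + 1) = i + 1 from by omega] at e
      rw [hC1, hC2]
      exact_mod_cast e
    have hE2 : D2 * ((v : ℚ) + (u : ℚ) + 2) = D1 * ((u : ℚ) + 1) := by
      have e := Nat.choose_mul_succ_eq (v + u + 1) (v + 1)
      rw [show v + u + 1 + 1 = v + u + 2 from by omega,
          show v + u + 1 + 1 - (v + 1) = u + 1 from by omega] at e
      rw [hD1, hD2]
      exact_mod_cast e
    have hratio : ((i : ℚ) + 1) * ((u : ℚ) + (v : ℚ) + 2) * (C2 * D2)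
        = ((v : ℚ) + (i : ℚ) + 2) * ((u : ℚ) + 1) * (C1 * D1) := by
      linear_combination (-((u : ℚ) + (v : ℚ) + 2)) * D2 * hE1
        + ((v : ℚ) + (i : ℚ) + 2) * C1 * hE2
    have hC1n : (0:ℚ) ≤ C1 := by rw [hC1]; positivity
    have hC2n : (0:ℚ) ≤ C2 := by rw [hC2]; positivity
    have hD1n : (0:ℚ) ≤ D1 := by rw [hD1]; positivity
    have hD2n : (0:ℚ) ≤ D2 := by rw [hD2]; positivity
    have hu1 : (0:ℚ) < (u : ℚ) + 1 := by positivity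
    have hi1 : (0:ℚ) < (i : ℚ) + 1 := by positivity
    -- the main step: C1*D1 + 2 ≤ (1 + (v+1)/(u+1)) * (C2*D2)
    have h4 : C1 * D1 + 2 ≤ (1 + ((v : ℚ) + 1) / ((u : ℚ) + 1)) * (C2 * D2) := by
      have hre : (1 + ((v : ℚ) + 1) / ((u : ℚ) + 1)) * (C2 * D2)
          = (((u : ℚ) + (v : ℚ) + 2) * (C2 * D2)) / ((u : ℚ) + 1) := by
        rw [eq_div_iff (ne_of_gt hu1)]
        have hcan : ((v : ℚ) + 1) / ((u : ℚ) + 1) * ((u : ℚ) + 1) = (v : ℚ) + 1 :=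
          div_mul_cancel₀ _ (ne_of_gt hu1)
        linear_combination (C2 * D2) * hcan
      rw [hre, le_div_iff₀ hu1]
      have h5 : ((u : ℚ) + 1) * (2 * ((i : ℚ) + 1))
          ≤ ((u : ℚ) + 1) * (((v : ℚ) + 1) * (C1 * D1)) :=
        mul_le_mul_of_nonneg_left hX (le_of_lt hu1)
      nlinarith [hratio, h5, hi1, hu1, mul_nonneg hC1n hD1n, mul_nonneg hC2n hD2n]
    have hfin : (1 + (((v + 2 : ℕ) : ℚ) - 1) * (((i + 2 : ℕ) : ℚ) - ((i + 1 : ℕ) : ℚ) + 1) / ((u : ℚ) + 2)) * C1 * D1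
          + (1 + (((v + 2 : ℕ) : ℚ) - 1) * (((i + 2 : ℕ) : ℚ) - ((i + 2 : ℕ) : ℚ) + 1) / ((u : ℚ) + 1)) * C2 * D2
          - (2 * ((1 + (((v + 2 : ℕ) : ℚ) - 1) * (((i + 1 : ℕ) : ℚ) - ((i + 1 : ℕ) : ℚ) + 1) / ((u : ℚ) + 2)) * C1 * D1) + 2)
        = (1 + ((v : ℚ) + 1) / ((u : ℚ) + 1)) * (C2 * D2) - (C1 * D1 + 2) := by
      push_cast
      ring
    linarith [h4, hfin]
  -- the polynomial parts
  have hpoly : ((i : ℚ)) * (((i + 2 + u : ℕ) : ℚ) - i) + (((i + 2 : ℕ) : ℚ)) * (((i + 2 + u : ℕ) : ℚ) - ((i + 2 : ℕ) : ℚ))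
      = 2 * ((((i + 1 : ℕ)) : ℚ) * (((i + 2 + u : ℕ) : ℚ) - ((i + 1 : ℕ) : ℚ))) - 2 := by
    push_cast; ring
  have hK : ∀ K : ℚ, K * ((((v + 2 : ℕ) : ℚ) - 1) * ((i + 2 + u : ℕ) : ℚ) + (i : ℚ))
      + K * ((((v + 2 : ℕ) : ℚ) - 1) * ((i + 2 + u : ℕ) : ℚ) + ((i + 2 : ℕ) : ℚ))
      = 2 * (K * ((((v + 2 : ℕ) : ℚ) - 1) * ((i + 2 + u : ℕ) : ℚ) + ((i + 1 : ℕ) : ℚ))) := by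
    intro K; push_cast; ring
  rw [hA i, hA (i + 1), hA (i + 2), hs2, hs1]
  have := hK ((Nat.choose (v + 2 + (i + 2 + u) - 2) (v + 2 - 1) : ℚ)
      + (Nat.choose (v + 2 + (i + 2 + u) - 1) (v + 2) : ℚ))
  linarith [hlin, htail, hpoly, this]

/-- Discrete convex function nonpositive at endpoints is nonpositive throughout. -/
lemma endpoint_max (g : ℕ → ℚ) (n : ℕ)
    (hc : ∀ i, i + 2 ≤ n → 2 * g (i + 1) ≤ g i + g (i + 2))
    (h0 : g 0 ≤ 0) (hend : g n ≤ 0) : ∀ i, i ≤ n → g i ≤ 0 := by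
  have mono : ∀ k l, k ≤ l → l + 1 ≤ n → g (k + 1) - g k ≤ g (l + 1) - g l := by
    intro k l hkl
    induction l with
    | zero =>
      intro _
      have : k = 0 := by omega
      subst this; exact le_rfl
    | succ l ih =>
      intro hl
      rcases Nat.eq_or_lt_of_le hkl with rfl | hlt
      · exact le_rfl
      · have h1 := ih (by omega) (by omega)
        have h2 := hc l (by omega)
        linarith
  intro i hi
  by_contra hpos
  push_neg at hpos
  have hi0 : i ≠ 0 := by rintro rfl; linarith
  have hin : i ≠ n := by rintro rfl; linarith
  have hsum1 : ∑ k ∈ Finset.range i, (g (k + 1) - g k) = g i - g 0 :=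
    Finset.sum_range_sub g i
  have hex : ∃ k, k < i ∧ 0 < g (k + 1) - g k := by
    by_contra hno
    push_neg at hno
    have : ∑ k ∈ Finset.range i, (g (k + 1) - g k) ≤ 0 :=
      Finset.sum_nonpos fun k hk => hno k (Finset.mem_range.1 hk)
    linarith
  obtain ⟨k, hk, hDk⟩ := hex
  have hsum2 : ∑ k ∈ Finset.Ico i n, (g (k + 1) - g k) = g n - g i := by
    rw [Finset.sum_Ico_eq_sub _ hi, Finset.sum_range_sub g n, Finset.sum_range_sub g i]
    ring
  have hnn : 0 ≤ ∑ k ∈ Finset.Ico i n, (g (k + 1) - g k) := by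
    apply Finset.sum_nonneg
    intro l hl
    have hl' := Finset.mem_Ico.1 hl
    have := mono k l (by omega) (by omega)
    linarith
  linarith


theorem stmt_4 (m n : ℕ) (hm : 2 ≤ m) (hn : 2 ≤ n) :
    (∀ i : ℕ, i ≤ n →
      (A4 m n i + 1) / B4 m n i ≤ max ((A4 m n 0 + 1) / B4 m n 0) ((A4 m n n + 1) / B4 m n n)) ∧
    (∀ i : ℕ, 1 ≤ i → i ≤ n - 1 →
      (A4 m n i + 1) / B4 m n i ≤ max ((A4 m n 0 + 1) / B4 m n 0) ((A4 m n n + 1) / B4 m n n)) := by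
  set t := max ((A4 m n 0 + 1) / B4 m n 0) ((A4 m n n + 1) / B4 m n n) with ht
  have hB : ∀ i, 0 < B4 m n i := fun i => B4_pos m n hm hn i
  have main : ∀ i : ℕ, i ≤ n → (A4 m n i + 1) / B4 m n i ≤ t := by
    have hg : ∀ i, i ≤ n → A4 m n i + 1 - t * B4 m n i ≤ 0 := by
      apply endpoint_max
      · intro j hj
        have h1 := A4_convex m n hm hn j hj
        have hBaff : B4 m n j + B4 m n (j + 2) = 2 * B4 m n (j + 1) := by
          unfold B4; push_cast; ring
        have h2 : t * B4 m n j + t * B4 m n (j + 2) = 2 * (t * B4 m n (j + 1)) := by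
          linear_combination t * hBaff
        linarith
      · have h0 : (A4 m n 0 + 1) / B4 m n 0 ≤ t := le_max_left _ _
        rw [div_le_iff₀ (hB 0)] at h0
        linarith
      · have h0 : (A4 m n n + 1) / B4 m n n ≤ t := le_max_right _ _
        rw [div_le_iff₀ (hB n)] at h0
        linarith
    intro i hi
    rw [div_le_iff₀ (hB i)]
    have := hg i hi
    linarith
  exact ⟨main, fun i _ h2 => main i (by omega)⟩
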